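/- Define the Lobachevsky function Λ(x) = −∫_0^x log|2 sin t| dt. For α ∈ (0, π/3), let θ = θ(α) ∈ (π, 2π) satisfy cos θ = cos α − 1/2. Then d/dα [ −2(Λ((α+θ)/2) − Λ((α−θ)/2)) ] = log|t − √(t²−1)| where t = 1 + cos α − cos 2α. -/

import Mathlib

open Real intervalIntegral

open MeasureTheory in
section
set_option maxHeartbeats 1000000


noncomputable def mednykhF (t : ℝ) : ℝ := Real.log |2 * Real.sin t|

lemma mednykhF_meas : Measurable mednykhF :=
  Real.measurable_log.comp ((measurable_sin.const_mul 2).abs)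

lemma mednykhF_bound {t : ℝ} (ht : t ∈ Set.Ioc (0:ℝ) (π/2)) :
    ‖mednykhF t‖ ≤ Real.log 2 + 2 * t ^ (-(1/2) : ℝ) := by
  obtain ⟨ht0, htp⟩ := ht
  have hs : 0 < Real.sin t := Real.sin_pos_of_pos_of_lt_pi ht0 (by linarith [Real.pi_pos])
  have habs : |2 * Real.sin t| = 2 * Real.sin t := abs_of_pos (by linarith)
  have hrp : (0:ℝ) < t ^ (-(1/2) : ℝ) := Real.rpow_pos_of_pos ht0 _
  have hup : Real.log (2 * Real.sin t) ≤ Real.log 2 :=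
    Real.log_le_log (by linarith) (by nlinarith [Real.sin_le_one t])
  have hts : t ≤ 2 * Real.sin t := by
    have h := Real.mul_le_sin (le_of_lt ht0) htp
    have h2 : 2 * t ≤ π * Real.sin t := by
      have h3 := mul_le_mul_of_nonneg_left h (le_of_lt Real.pi_pos)
      have h4 : π * (2 / π * t) = 2 * t := by
        field_simp
      linarith
    nlinarith [Real.pi_le_four]
  have hlow : Real.log t ≤ Real.log (2 * Real.sin t) := Real.log_le_log ht0 hts
  have hneg : -Real.log t ≤ 2 * t ^ (-(1/2) : ℝ) := by
    have h1 : Real.log (t ^ (-(1/2) : ℝ)) = -(1/2) * Real.log t := Real.log_rpow ht0 _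
    have h2 : Real.log (t ^ (-(1/2) : ℝ)) ≤ t ^ (-(1/2) : ℝ) - 1 :=
      Real.log_le_sub_one_of_pos hrp
    linarith
  have hl2 : (0:ℝ) ≤ Real.log 2 := Real.log_nonneg (by norm_num)
  rw [Real.norm_eq_abs, mednykhF, habs, abs_le]
  constructor <;> linarith

lemma mednykhF_int_half : IntervalIntegrable mednykhF volume 0 (π/2) := by
  have hg : IntervalIntegrable (fun t : ℝ => Real.log 2 + 2 * t ^ (-(1/2) : ℝ)) volume 0 (π/2) :=
    intervalIntegrable_const.add ((intervalIntegrable_rpow' (by norm_num)).const_mul 2)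
  refine hg.mono_fun' mednykhF_meas.aestronglyMeasurable.restrict ?_
  have h1 : Set.uIoc (0:ℝ) (π/2) = Set.Ioc 0 (π/2) := Set.uIoc_of_le (by positivity)
  rw [h1]
  exact (MeasureTheory.ae_restrict_iff' measurableSet_Ioc).mpr
    (Filter.Eventually.of_forall fun t ht => mednykhF_bound ht)

lemma mednykhF_periodic : Function.Periodic mednykhF π := by
  intro x
  simp [mednykhF, Real.sin_add_pi, mul_neg, abs_neg]

lemma mednykhF_int_sym : IntervalIntegrable mednykhF volume (-(π/2)) (π/2) := by
  have h1 : IntervalIntegrable (fun x => mednykhF (-x)) volume 0 (-(π/2)) := by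
    simpa using (IntervalIntegrable.iff_comp_neg (f := mednykhF) (a := 0) (b := π/2) enorm_ne_top).mp mednykhF_int_half
  have h2 : IntervalIntegrable mednykhF volume 0 (-(π/2)) := by
    have : (fun x => mednykhF (-x)) = mednykhF := by
      funext x
      simp [mednykhF, Real.sin_neg, mul_neg, abs_neg]
    rwa [this] at h1
  exact h2.symm.trans mednykhF_int_half

lemma mednykhF_int_shift (k : ℤ) :
    IntervalIntegrable mednykhF volume (-(π/2) + k * π) (π/2 + k * π) := by
  have h := mednykhF_int_sym.comp_sub_right (k * π)
  have he : (fun x => mednykhF (x - k * π)) = mednykhF := by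
    funext x
    exact mednykhF_periodic.sub_int_mul_eq k
  rwa [he] at h

lemma mednykhF_int_chain (n : ℕ) :
    IntervalIntegrable mednykhF volume (-(π/2) - n * π) (π/2 + n * π) := by
  induction n with
  | zero => simpa using mednykhF_int_sym
  | succ n ih =>
    have hl : IntervalIntegrable mednykhF volume (-(π/2) - (n+1) * π) (-(π/2) - n * π) := by
      have := mednykhF_int_shift (-(n+1))
      have e1 : -(π/2) + ((-(n+1) : ℤ)) * π = -(π/2) - (n+1) * π := by push_cast; ring
      have e2 : (π/2) + ((-(n+1) : ℤ)) * π = -(π/2) - n * π := by push_cast; ring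
      rwa [e1, e2] at this
    have hr : IntervalIntegrable mednykhF volume (π/2 + n * π) (π/2 + (n+1) * π) := by
      have := mednykhF_int_shift (n+1)
      have e1 : -(π/2) + ((n+1 : ℤ)) * π = π/2 + n * π := by push_cast; ring
      have e2 : (π/2) + ((n+1 : ℤ)) * π = π/2 + (n+1) * π := by push_cast; ring
      rwa [e1, e2] at this
    push_cast
    push_cast at hl hr ih
    exact (hl.trans ih).trans hr

lemma mednykhF_int (a b : ℝ) : IntervalIntegrable mednykhF volume a b := by
  obtain ⟨n, hn⟩ := exists_nat_ge ((max |a| |b|) / π)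
  have hπ : (0:ℝ) < π := Real.pi_pos
  have hna : max |a| |b| ≤ n * π := by
    rw [div_le_iff₀ hπ] at hn
    linarith
  refine (mednykhF_int_chain n).mono_set ?_
  have h1 : -(π/2) - n * π ≤ min a b := by
    have := abs_nonneg a
    have h2 : -(max |a| |b|) ≤ min a b := by
      rcases min_cases a b with ⟨h,_⟩|⟨h,_⟩ <;> rw [h] <;>
        [exact (neg_le_neg (le_max_left _ _)).trans (neg_abs_le a);
         exact (neg_le_neg (le_max_right _ _)).trans (neg_abs_le b)]
    linarith
  have h2 : max a b ≤ π/2 + n * π := by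
    have h3 : max a b ≤ max |a| |b| := max_le_max (le_abs_self a) (le_abs_self b)
    linarith
  have hLR : -(π/2) - (n:ℝ) * π ≤ π/2 + (n:ℝ) * π := by
    have : (0:ℝ) ≤ n * π := by positivity
    linarith
  calc Set.uIcc a b = Set.Icc (a ⊓ b) (a ⊔ b) := rfl
    _ ⊆ Set.Icc (-(π/2) - n * π) (π/2 + n * π) := Set.Icc_subset_Icc h1 h2
    _ = Set.uIcc (-(π/2) - n * π) (π/2 + n * π) := (Set.uIcc_of_le hLR).symm

lemma mednykhLam_deriv (Λ : ℝ → ℝ)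
    (hΛ : ∀ x : ℝ, Λ x = -∫ t in (0:ℝ)..x, Real.log |2 * Real.sin t|)
    {x : ℝ} (hx : Real.sin x ≠ 0) :
    HasDerivAt Λ (-Real.log |2 * Real.sin x|) x := by
  have hΛeq : Λ = fun y => -∫ t in (0:ℝ)..y, mednykhF t := funext hΛ
  have h2 : |2 * Real.sin x| ≠ 0 := abs_ne_zero.mpr (mul_ne_zero two_ne_zero hx)
  have hcont : ContinuousAt mednykhF x := by
    have hc : ContinuousAt (fun t : ℝ => |2 * Real.sin t|) x :=
      ((continuous_const.mul Real.continuous_sin).abs).continuousAt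
    exact hc.log h2
  have h := intervalIntegral.integral_hasDerivAt_right (mednykhF_int 0 x)
      mednykhF_meas.aestronglyMeasurable.stronglyMeasurableAtFilter hcont
  rw [hΛeq]
  exact h.neg

theorem mednykh_volume_derivative
    (Λ : ℝ → ℝ) (hΛ : ∀ x : ℝ, Λ x = -∫ t in (0:ℝ)..x, Real.log |2 * Real.sin t|)
    (θ : ℝ → ℝ)
    (hθ : ∀ a ∈ Set.Ioo (0:ℝ) (Real.pi / 3),
      θ a ∈ Set.Ioo Real.pi (2 * Real.pi) ∧ Real.cos (θ a) = Real.cos a - 1 / 2)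
    (α : ℝ) (hα : α ∈ Set.Ioo (0:ℝ) (Real.pi / 3)) :
    HasDerivAt (fun a : ℝ => -2 * (Λ ((a + θ a) / 2) - Λ ((a - θ a) / 2)))
      (Real.log |(1 + Real.cos α - Real.cos (2 * α)) -
        Real.sqrt ((1 + Real.cos α - Real.cos (2 * α)) ^ 2 - 1)|) α := by
  obtain ⟨hα0, hα3⟩ := hα
  have hπ := Real.pi_pos
  set g : ℝ → ℝ := fun a => 2 * π - Real.arccos (Real.cos a - 1/2) with hg
  -- θ = g on the interval
  have hge : ∀ a ∈ Set.Ioo (0:ℝ) (π/3), θ a = g a := by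
    intro a ha
    obtain ⟨⟨h1, h2⟩, h3⟩ := hθ a ha
    have hc : Real.cos (2 * π - θ a) = Real.cos (θ a) := by
      rw [Real.cos_sub]
      simp [Real.cos_two_pi, Real.sin_two_pi]
    have harc : Real.arccos (Real.cos a - 1/2) = 2 * π - θ a := by
      rw [← h3, ← hc, Real.arccos_cos (by linarith) (by linarith)]
    simp only [hg]
    rw [harc]; ring
  -- θ α facts
  obtain ⟨⟨hθ1, hθ2⟩, hθ3⟩ := hθ α ⟨hα0, hα3⟩
  -- basic trig facts at α
  have hαπ : α < π := by linarith
  have hsα : 0 < Real.sin α := Real.sin_pos_of_pos_of_lt_pi hα0 hαπ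
  have hcα1 : Real.cos α < 1 := by
    have := Real.cos_lt_cos_of_nonneg_of_le_pi (le_refl 0) (le_of_lt hαπ) hα0
    simpa using this
  have hcαh : 1/2 < Real.cos α := by
    have := Real.cos_lt_cos_of_nonneg_of_le_pi (le_of_lt hα0) (by linarith) hα3
    simpa [Real.cos_pi_div_three] using this
  set u : ℝ := Real.cos α - 1/2 with hu
  have hu1 : u ≠ -1 := by rw [hu]; intro h; nlinarith
  have hu2 : u ≠ 1 := by rw [hu]; intro h; nlinarith
  -- derivative of g
  have hgd : HasDerivAt g (-((Real.sqrt (1 - u^2))⁻¹ * Real.sin α)) α := by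
    have hin : HasDerivAt (fun a : ℝ => Real.cos a - 1/2) (-Real.sin α) α :=
      (Real.hasDerivAt_cos α).sub_const (1/2)
    have harc := (Real.hasDerivAt_arccos hu1 hu2).comp α hin
    simpa [hg] using harc.const_sub (2 * π)
  set D : ℝ := -((Real.sqrt (1 - u^2))⁻¹ * Real.sin α) with hD
  set p : ℝ := (α + θ α) / 2 with hp
  set q : ℝ := (α - θ α) / 2 with hq
  -- product of sines
  have hprod : Real.sin p * Real.sin q = -(1/4) := by
    have h := Real.cos_sub_cos α (θ α)
    rw [hθ3] at h
    have : -2 * Real.sin p * Real.sin q = 1/2 := by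
      rw [hp, hq]; linarith [h]
    linarith
  have hsp : Real.sin p ≠ 0 := by intro h; rw [h] at hprod; norm_num at hprod
  have hsq : Real.sin q ≠ 0 := by intro h; rw [h] at hprod; norm_num at hprod
  have h2p : |2 * Real.sin p| ≠ 0 := abs_ne_zero.mpr (mul_ne_zero two_ne_zero hsp)
  have h2q : |2 * Real.sin q| ≠ 0 := abs_ne_zero.mpr (mul_ne_zero two_ne_zero hsq)
  -- Λ derivatives
  have hΛp := mednykhLam_deriv Λ hΛ hsp
  have hΛq := mednykhLam_deriv Λ hΛ hsq
  -- inner derivatives (using g)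
  have hθgα : θ α = g α := hge α ⟨hα0, hα3⟩
  have hin1 : HasDerivAt (fun a : ℝ => (a + g a) / 2) ((1 + D) / 2) α :=
    ((hasDerivAt_id α).add hgd).div_const 2
  have hin2 : HasDerivAt (fun a : ℝ => (a - g a) / 2) ((1 - D) / 2) α :=
    ((hasDerivAt_id α).sub hgd).div_const 2
  have hpe : (α + g α) / 2 = p := by rw [hp, hθgα]
  have hqe : (α - g α) / 2 = q := by rw [hq, hθgα]
  rw [← hpe] at hΛp
  rw [← hqe] at hΛq
  have hc1 : HasDerivAt (fun a : ℝ => Λ ((a + g a) / 2))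
      (-Real.log |2 * Real.sin ((α + g α)/2)| * ((1 + D) / 2)) α := hΛp.comp α hin1
  have hc2 : HasDerivAt (fun a : ℝ => Λ ((a - g a) / 2))
      (-Real.log |2 * Real.sin ((α - g α)/2)| * ((1 - D) / 2)) α := hΛq.comp α hin2
  rw [hpe] at hc1
  rw [hqe] at hc2
  set Lp : ℝ := Real.log |2 * Real.sin p| with hLp
  set Lq : ℝ := Real.log |2 * Real.sin q| with hLq
  have hG : HasDerivAt (fun a : ℝ => -2 * (Λ ((a + g a) / 2) - Λ ((a - g a) / 2)))
      (-2 * (-Lp * ((1 + D) / 2) - -Lq * ((1 - D) / 2))) α := (hc1.sub hc2).const_mul (-2)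
  -- transfer to θ
  have hEv : (fun a : ℝ => -2 * (Λ ((a + θ a) / 2) - Λ ((a - θ a) / 2))) =ᶠ[nhds α]
      (fun a : ℝ => -2 * (Λ ((a + g a) / 2) - Λ ((a - g a) / 2))) := by
    filter_upwards [isOpen_Ioo.mem_nhds (⟨hα0, hα3⟩ : α ∈ Set.Ioo 0 (π/3))] with a ha
    rw [hge a ha]
  have hF : HasDerivAt (fun a : ℝ => -2 * (Λ ((a + θ a) / 2) - Λ ((a - θ a) / 2)))
      (-2 * (-Lp * ((1 + D) / 2) - -Lq * ((1 - D) / 2))) α := hG.congr_of_eventuallyEq hEv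
  -- now identify the derivative value
  have hsum : Lp + Lq = 0 := by
    rw [hLp, hLq, ← Real.log_mul h2p h2q, ← abs_mul]
    have : (2 * Real.sin p) * (2 * Real.sin q) = -1 := by nlinarith [hprod]
    rw [this]
    simp
  set T : ℝ := 1 + Real.cos α - Real.cos (2 * α) with hT
  have hsc := Real.sin_sq_add_cos_sq α
  have hscθ := Real.sin_sq_add_cos_sq (θ α)
  -- sin θ = -√(1 - u^2)
  have hsθneg : Real.sin (θ α) < 0 := by
    have h1 : 0 < Real.sin (θ α - π) :=
      Real.sin_pos_of_pos_of_lt_pi (by linarith) (by linarith)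
    rw [Real.sin_sub_pi] at h1
    linarith
  have hXθ : Real.sqrt (1 - u^2) = -Real.sin (θ α) := by
    rw [show 1 - u^2 = (-Real.sin (θ α))^2 by rw [← hθ3]; nlinarith [hscθ],
      Real.sqrt_sq (by linarith)]
  -- √(T²-1) = 2 sin α √(1-u²)
  have hT2 : T^2 - 1 = (2 * Real.sin α)^2 * (1 - u^2) := by
    rw [hT, hu, Real.cos_two_mul]; nlinarith [hsc]
  have hsqrtT : Real.sqrt (T^2 - 1) = 2 * Real.sin α * Real.sqrt (1 - u^2) := by
    rw [hT2, Real.sqrt_mul (sq_nonneg _), Real.sqrt_sq (by linarith)]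
  -- T - √(T²-1) = (2 sin p)²
  have hcosαθ : Real.cos (α + θ α) = Real.cos α * Real.cos (θ α) -
      Real.sin α * Real.sin (θ α) := Real.cos_add α (θ α)
  have hcos2p : Real.cos (2 * p) = 1 - 2 * Real.sin p ^ 2 := by
    rw [Real.cos_two_mul]
    nlinarith [Real.sin_sq_add_cos_sq p]
  have h2pθ : 2 * p = α + θ α := by rw [hp]; ring
  have hkey : T - Real.sqrt (T^2 - 1) = (2 * Real.sin p)^2 := by
    have e1 : (2 * Real.sin p)^2 = 2 - 2 * Real.cos (α + θ α) := by
      rw [← h2pθ]; nlinarith [hcos2p]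
    rw [e1, hsqrtT, hcosαθ, hθ3, hXθ, hT, Real.cos_two_mul]
    linear_combination (2 * Real.cos α) * hu
  have hpos : (0:ℝ) < (2 * Real.sin p)^2 :=
    lt_of_le_of_ne (sq_nonneg _) (Ne.symm (pow_ne_zero 2 (mul_ne_zero two_ne_zero hsp)))
  have habs : |T - Real.sqrt (T^2 - 1)| = (2 * Real.sin p)^2 := by
    rw [hkey]; exact abs_of_pos hpos
  have hlog : Real.log |T - Real.sqrt (T^2 - 1)| = 2 * Lp := by
    rw [habs, hLp, ← Real.log_abs, abs_pow, Real.log_pow]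
    push_cast; ring
  have hfinal : -2 * (-Lp * ((1 + D) / 2) - -Lq * ((1 - D) / 2)) =
      Real.log |T - Real.sqrt (T^2 - 1)| := by
    rw [hlog]
    have : Lq = -Lp := by linarith
    rw [this]; ring
  rw [hT] at hfinal
  exact hfinal ▸ hF

end
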